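/- For a word $W_k = (1\,2\cdots p\,p^*\cdots 2^*\,1^*)^k$ of length $m=kp$, the number of noncrossing pair partitions of $[m]$ in which every block pairs a letter $j$ with a letter $j^*$ (noncrossing $W_k$-pairings) equals the Fuss–Catalan number $F(p,k)=\frac{1}{pk+1}\binom{pk+k}{k}$. -/

import Mathlib

/-- `f` encodes a noncrossing pair partition of `[m]` (identified with `Fin m`):
`f` is a fixed-point-free involution whose blocks `{i, f i}` do not cross. -/
def IsNCPairing {m : ℕ} (f : Fin m → Fin m) : Prop :=
  (∀ i, f (f i) = i) ∧ (∀ i, f i ≠ i) ∧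
  ∀ i j : Fin m, i < j → j < f i → f i < f j → False

instance {m : ℕ} : DecidablePred (IsNCPairing (m := m)) := fun f => by
  unfold IsNCPairing; infer_instance

/-- The letter of the word `W_k = (1 2 ⋯ p p* ⋯ 2* 1*)^k` at (0-based) position `i`:
a pair (letter number, starred?). -/
def wordLabel (p : ℕ) (i : ℕ) : ℕ × Bool :=
  let s := i % (2*p)
  if s < p then (s + 1, false) else (2*p - s, true)

/-- `f` is a noncrossing `W_k`-pairing: a noncrossing pair partition all of whose
blocks join a position labeled `j` with a position labeled `j*`. -/
def IsWkPairing (p : ℕ) {m : ℕ} (f : Fin m → Fin m) : Prop :=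
  IsNCPairing f ∧ ∀ i : Fin m,
    (wordLabel p (f i)).1 = (wordLabel p i).1 ∧
    (wordLabel p (f i)).2 = !(wordLabel p i).2

instance {p m : ℕ} : DecidablePred (IsWkPairing p (m := m)) := fun f => by
  unfold IsWkPairing; infer_instance

namespace Stmt13

/-- Count of noncrossing pairings compatible with relation `R` on positions. -/
noncomputable def cntR (n : ℕ) (R : ℕ → ℕ → Prop) : ℕ :=
  Nat.card {f : Fin n → Fin n // IsNCPairing f ∧ ∀ i : Fin n, R i.val (f i).val}

lemma cntR_congr {n : ℕ} {R R' : ℕ → ℕ → Prop}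
    (h : ∀ x y, x < n → y < n → (R x y ↔ R' x y)) : cntR n R = cntR n R' :=
  Nat.card_congr (Equiv.subtypeEquivRight fun f => and_congr_right fun _ =>
    forall_congr' fun i => h _ _ i.isLt (f i).isLt)

lemma cntR_zero (R : ℕ → ℕ → Prop) : cntR 0 R = 1 := by
  rw [cntR, Nat.card_eq_one_iff_unique]
  constructor
  · refine ⟨fun a b => ?_⟩
    exact Subtype.ext (funext fun i => i.elim0)
  · exact ⟨⟨fun i => i.elim0, ⟨fun i => i.elim0, fun i => i.elim0, fun i => i.elim0⟩,
      fun i => i.elim0⟩⟩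

section Glue

variable {n j : ℕ} (hj : j < n)

/-- Glue pairings of the inside and outside regions, together with the arc `{0, j+1}`,
into a pairing of `Fin (n+1)`. -/
def glue (g : Fin j → Fin j) (h : Fin (n-j-1) → Fin (n-j-1)) : Fin (n+1) → Fin (n+1) :=
  fun i =>
    if h0 : i.val = 0 then ⟨j+1, by omega⟩
    else if hc : i.val = j+1 then ⟨0, by omega⟩
    else if hlt : i.val < j+1 then
      ⟨(g ⟨i.val-1, by omega⟩).val + 1, by have := (g ⟨i.val-1, by omega⟩).isLt; omega⟩
    else
      ⟨(h ⟨i.val-j-2, by have := i.isLt; omega⟩).val + j + 2, by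
        have := (h ⟨i.val-j-2, by have := i.isLt; omega⟩).isLt; have := i.isLt; omega⟩

variable (g : Fin j → Fin j) (h : Fin (n-j-1) → Fin (n-j-1))

lemma glue_zero (i : Fin (n+1)) (hi : i.val = 0) : (glue hj g h i).val = j+1 := by
  simp [glue, hi]

lemma glue_c (i : Fin (n+1)) (hi : i.val = j+1) : (glue hj g h i).val = 0 := by
  simp [glue, hi]

lemma glue_in (i : Fin (n+1)) (hi0 : 0 < i.val) (hic : i.val < j+1) :
    (glue hj g h i).val = (g ⟨i.val-1, by omega⟩).val + 1 := by
  rw [glue]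
  rw [dif_neg (by omega), dif_neg (by omega), dif_pos hic]

lemma glue_out (i : Fin (n+1)) (hic : j+1 < i.val) :
    (glue hj g h i).val = (h ⟨i.val-j-2, by have := i.isLt; omega⟩).val + j + 2 := by
  rw [glue]
  rw [dif_neg (by omega), dif_neg (by omega), dif_neg (by omega)]

end Glue

section GlueProps

variable {n j : ℕ} (hj : j < n) (g : Fin j → Fin j) (h : Fin (n-j-1) → Fin (n-j-1))

lemma glue_invol (hg : ∀ x, g (g x) = x) (hh : ∀ x, h (h x) = x) :
    ∀ i, glue hj g h (glue hj g h i) = i := by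
  intro i
  rcases Nat.eq_zero_or_pos i.val with hi0 | hi0
  · apply Fin.ext
    rw [glue_c hj g h _ (glue_zero hj g h i hi0), hi0]
  rcases eq_or_ne i.val (j+1) with hic | hic
  · apply Fin.ext
    rw [glue_zero hj g h _ (glue_c hj g h i hic), hic]
  rcases lt_or_gt_of_ne hic with hlt | hgt
  · have e1 := glue_in hj g h i hi0 hlt
    apply Fin.ext
    have e2 : 0 < (glue hj g h i).val := by omega
    have e3 : (glue hj g h i).val < j + 1 := by
      have := (g ⟨i.val-1, by omega⟩).isLt; omega
    rw [glue_in hj g h _ e2 e3]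
    have e4 : (⟨(glue hj g h i).val - 1, by omega⟩ : Fin j) = g ⟨i.val-1, by omega⟩ := by
      apply Fin.ext; simp only [Fin.val_mk, e1]; omega
    rw [e4, hg]
    simp only [Fin.val_mk]
    omega
  · have e1 := glue_out hj g h i hgt
    apply Fin.ext
    have e2 : j + 1 < (glue hj g h i).val := by omega
    rw [glue_out hj g h _ e2]
    have e4 : (⟨(glue hj g h i).val - j - 2, by have := (glue hj g h i).isLt; omega⟩ : Fin (n-j-1))
        = h ⟨i.val-j-2, by have := i.isLt; omega⟩ := by
      apply Fin.ext; simp only [Fin.val_mk, e1]; omega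
    rw [e4, hh]
    simp only [Fin.val_mk]
    have := i.isLt
    omega

lemma glue_nofix (hg : ∀ x, g x ≠ x) (hh : ∀ x, h x ≠ x) :
    ∀ i, glue hj g h i ≠ i := by
  intro i hEq
  have hv : (glue hj g h i).val = i.val := congrArg Fin.val hEq
  rcases Nat.eq_zero_or_pos i.val with hi0 | hi0
  · rw [glue_zero hj g h i hi0] at hv; omega
  rcases eq_or_ne i.val (j+1) with hic | hic
  · rw [glue_c hj g h i hic] at hv; omega
  rcases lt_or_gt_of_ne hic with hlt | hgt
  · rw [glue_in hj g h i hi0 hlt] at hv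
    exact hg ⟨i.val-1, by omega⟩ (by apply Fin.ext; simp only [Fin.val_mk]; omega)
  · rw [glue_out hj g h i hgt] at hv
    exact hh ⟨i.val-j-2, by have := i.isLt; omega⟩ (by
      apply Fin.ext; simp only [Fin.val_mk]; have := i.isLt; omega)

lemma glue_nc (hgi : ∀ x, g (g x) = x) (hhi : ∀ x, h (h x) = x)
    (hg : ∀ x y : Fin j, x < y → y < g x → g x < g y → False)
    (hh : ∀ x y : Fin (n-j-1), x < y → y < h x → h x < h y → False) :
    ∀ x y : Fin (n+1), x < y → y < glue hj g h x → glue hj g h x < glue hj g h y → False := by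
  intro x y hxy h1 h2
  have hxy' : x.val < y.val := hxy
  have h1' : y.val < (glue hj g h x).val := h1
  have h2' : (glue hj g h x).val < (glue hj g h y).val := h2
  rcases Nat.eq_zero_or_pos x.val with hx0 | hx0
  · -- x = 0 : glue x = j+1 ; then 0 < y < j+1 so glue y ≤ j, contradiction
    rw [glue_zero hj g h x hx0] at h1' h2'
    have hy0 : 0 < y.val := by omega
    have hyc : y.val < j+1 := h1'
    rw [glue_in hj g h y hy0 hyc] at h2'
    have := (g ⟨y.val-1, by omega⟩).isLt
    omega
  rcases eq_or_ne x.val (j+1) with hxc | hxc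
  · rw [glue_c hj g h x hxc] at h1'; omega
  rcases lt_or_gt_of_ne hxc with hxlt | hxgt
  · -- x inside
    have hgx := glue_in hj g h x hx0 hxlt
    have hgxlt : (glue hj g h x).val < j+1 := by
      have := (g ⟨x.val-1, by omega⟩).isLt; omega
    have hy0 : 0 < y.val := by omega
    have hyc : y.val < j+1 := by omega
    have hgy := glue_in hj g h y hy0 hyc
    refine hg ⟨x.val-1, by omega⟩ ⟨y.val-1, by omega⟩ ?_ ?_ ?_
    · show x.val - 1 < y.val - 1; omega
    · show y.val - 1 < _; rw [hgx] at h1'; omega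
    · show (g _).val < (g _).val; rw [hgx, hgy] at h2'; omega
  · -- x outside
    have hgx := glue_out hj g h x hxgt
    have hygt : j+1 < y.val := by omega
    have hgy := glue_out hj g h y hygt
    have hxLt := x.isLt
    have hyLt := y.isLt
    refine hh ⟨x.val-j-2, by omega⟩ ⟨y.val-j-2, by omega⟩ ?_ ?_ ?_
    · show x.val - j - 2 < y.val - j - 2; omega
    · show y.val - j - 2 < _; rw [hgx] at h1'; omega
    · show (h _).val < (h _).val; rw [hgx, hgy] at h2'; omega

end GlueProps
end Stmt13

namespace Stmt13
section Decomp

variable {n j : ℕ} {R : ℕ → ℕ → Prop}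

lemma inside_bound {f : Fin (n+1) → Fin (n+1)} (hf : IsNCPairing f) (hj : j < n)
    (h0 : (f 0).val = j + 1) (x : Fin (n+1)) (hx0 : 0 < x.val) (hxc : x.val < j+1) :
    0 < (f x).val ∧ (f x).val < j+1 := by
  obtain ⟨hinv, hne, hnc⟩ := hf
  have hfx0 : (f x).val ≠ 0 := by
    intro hz
    have hz' : f x = 0 := Fin.ext hz
    have : x = f 0 := by rw [← hz', hinv]
    rw [this] at hxc
    omega
  have hfxc : (f x).val ≠ j + 1 := by
    intro hz
    have hz' : f x = f 0 := Fin.ext (by rw [hz, h0])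
    have : x = (0 : Fin (n+1)) := by
      have := congrArg f hz'
      rwa [hinv, hinv] at this
    rw [this] at hx0
    simp at hx0
  refine ⟨by omega, ?_⟩
  by_contra hge
  exact hnc 0 x (by exact hx0) (by show x.val < (f 0).val; omega)
    (by show (f 0).val < (f x).val; omega)

lemma outside_bound {f : Fin (n+1) → Fin (n+1)} (hf : IsNCPairing f) (hj : j < n)
    (h0 : (f 0).val = j + 1) (x : Fin (n+1)) (hx : j+1 < x.val) :
    j+1 < (f x).val := by
  obtain ⟨hinv, hne, hnc⟩ := hf
  have hfx0 : (f x).val ≠ 0 := by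
    intro hz
    have hz' : f x = 0 := Fin.ext hz
    have : x = f 0 := by rw [← hz', hinv]
    rw [this] at hx
    omega
  have hfxc : (f x).val ≠ j + 1 := by
    intro hz
    have hz' : f x = f 0 := Fin.ext (by rw [hz, h0])
    have : x = (0 : Fin (n+1)) := by
      have := congrArg f hz'
      rwa [hinv, hinv] at this
    rw [this] at hx
    simp at hx
  by_contra hge
  exact hnc 0 (f x) (by show (0:ℕ) < (f x).val; omega)
    (by show (f x).val < (f 0).val; omega)
    (by show (f 0).val < (f (f x)).val; rw [hinv]; omega)

set_option maxHeartbeats 3000000 in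
noncomputable def fibEquiv (hj : j < n) (h1 : R 0 (j+1)) (h2 : R (j+1) 0) :
    {f : Fin (n+1) → Fin (n+1) //
        (IsNCPairing f ∧ ∀ i : Fin (n+1), R i.val (f i).val) ∧ (f 0).val = j + 1}
    ≃ {g : Fin j → Fin j // IsNCPairing g ∧ ∀ x : Fin j, R (x.val+1) ((g x).val+1)} ×
      {g : Fin (n-j-1) → Fin (n-j-1) //
          IsNCPairing g ∧ ∀ x : Fin (n-j-1), R (x.val+j+2) ((g x).val+j+2)} where
  toFun F := by
    obtain ⟨f, ⟨hf, hR⟩, h0⟩ := F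
    obtain ⟨hinv, hne, hnc⟩ := hf
    refine ⟨⟨fun x => ⟨(f ⟨x.val+1, by omega⟩).val - 1, ?_⟩, ⟨?_, ?_, ?_⟩, ?_⟩,
            ⟨fun x => ⟨(f ⟨x.val+j+2, by have := x.isLt; omega⟩).val - (j+2), ?_⟩, ⟨?_, ?_, ?_⟩, ?_⟩⟩
    · have := inside_bound ⟨hinv, hne, hnc⟩ hj h0 ⟨x.val+1, by omega⟩ (by simp) (by
        simp only [Fin.val_mk]; omega)
      omega
    · -- inside involution
      intro x
      apply Fin.ext
      simp only [Fin.val_mk]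
      have hb := inside_bound ⟨hinv, hne, hnc⟩ hj h0 ⟨x.val+1, by omega⟩ (by simp)
        (by simp only [Fin.val_mk]; omega)
      have e1 : (⟨(f ⟨x.val+1, by omega⟩).val - 1 + 1, by omega⟩ : Fin (n+1))
          = f ⟨x.val+1, by omega⟩ := by
        apply Fin.ext; simp only [Fin.val_mk]; omega
      rw [e1, hinv]
      simp
    · -- inside no fixed point
      intro x hx
      have hv := congrArg Fin.val hx
      simp only [Fin.val_mk] at hv
      have hb := inside_bound ⟨hinv, hne, hnc⟩ hj h0 ⟨x.val+1, by omega⟩ (by simp)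
        (by simp only [Fin.val_mk]; omega)
      exact hne ⟨x.val+1, by omega⟩ (by apply Fin.ext; simp only [Fin.val_mk]; omega)
    · -- inside noncrossing
      intro x y hxy h1' h2'
      have hbx := inside_bound ⟨hinv, hne, hnc⟩ hj h0 ⟨x.val+1, by omega⟩ (by simp)
        (by simp only [Fin.val_mk]; omega)
      have hby := inside_bound ⟨hinv, hne, hnc⟩ hj h0 ⟨y.val+1, by omega⟩ (by simp)
        (by simp only [Fin.val_mk]; omega)
      have h1v : y.val < (f ⟨x.val+1, by omega⟩).val - 1 := h1'
      have h2v : (f ⟨x.val+1, by omega⟩).val - 1 < (f ⟨y.val+1, by omega⟩).val - 1 := h2'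
      exact hnc ⟨x.val+1, by omega⟩ ⟨y.val+1, by omega⟩
        (by show x.val+1 < y.val+1; exact Nat.add_lt_add_right hxy 1)
        (by show y.val+1 < _; omega) (by show _ < _; omega)
    · -- inside R
      intro x
      have hb := inside_bound ⟨hinv, hne, hnc⟩ hj h0 ⟨x.val+1, by omega⟩ (by simp)
        (by simp only [Fin.val_mk]; omega)
      have := hR ⟨x.val+1, by omega⟩
      simp only [Fin.val_mk] at this ⊢
      have e : (f ⟨x.val+1, by omega⟩).val - 1 + 1 = (f ⟨x.val+1, by omega⟩).val := by omega
      rwa [e]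
    · have hx := x.isLt
      have := outside_bound ⟨hinv, hne, hnc⟩ hj h0 ⟨x.val+j+2, by omega⟩
        (by simp only [Fin.val_mk]; omega)
      have := (f ⟨x.val+j+2, by omega⟩).isLt
      omega
    · -- outside involution
      intro x
      apply Fin.ext
      simp only [Fin.val_mk]
      have hx := x.isLt
      have hb := outside_bound ⟨hinv, hne, hnc⟩ hj h0 ⟨x.val+j+2, by omega⟩
        (by simp only [Fin.val_mk]; omega)
      have hlt := (f ⟨x.val+j+2, by omega⟩).isLt
      have e1 : (⟨(f ⟨x.val+j+2, by omega⟩).val - (j+2) + j + 2, by omega⟩ : Fin (n+1))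
          = f ⟨x.val+j+2, by omega⟩ := by
        apply Fin.ext; simp only [Fin.val_mk]; omega
      rw [e1, hinv]
      simp
    · -- outside no fixed point
      intro x hx
      have hv := congrArg Fin.val hx
      simp only [Fin.val_mk] at hv
      have hxlt := x.isLt
      have hb := outside_bound ⟨hinv, hne, hnc⟩ hj h0 ⟨x.val+j+2, by omega⟩
        (by simp only [Fin.val_mk]; omega)
      exact hne ⟨x.val+j+2, by omega⟩ (by apply Fin.ext; simp only [Fin.val_mk]; omega)
    · -- outside noncrossing
      intro x y hxy h1' h2'
      have hxlt := x.isLt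
      have hylt := y.isLt
      have hbx := outside_bound ⟨hinv, hne, hnc⟩ hj h0 ⟨x.val+j+2, by omega⟩
        (by simp only [Fin.val_mk]; omega)
      have hby := outside_bound ⟨hinv, hne, hnc⟩ hj h0 ⟨y.val+j+2, by omega⟩
        (by simp only [Fin.val_mk]; omega)
      have h1v : y.val < (f ⟨x.val+j+2, by omega⟩).val - (j+2) := h1'
      have h2v : (f ⟨x.val+j+2, by omega⟩).val - (j+2)
          < (f ⟨y.val+j+2, by omega⟩).val - (j+2) := h2'
      exact hnc ⟨x.val+j+2, by omega⟩ ⟨y.val+j+2, by omega⟩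
        (by show x.val+j+2 < y.val+j+2; omega)
        (by show y.val+j+2 < _; omega) (by show _ < _; omega)
    · -- outside R
      intro x
      have hxlt := x.isLt
      have hb := outside_bound ⟨hinv, hne, hnc⟩ hj h0 ⟨x.val+j+2, by omega⟩
        (by simp only [Fin.val_mk]; omega)
      have := hR ⟨x.val+j+2, by omega⟩
      simp only [Fin.val_mk] at this ⊢
      have e : (f ⟨x.val+j+2, by omega⟩).val - (j+2) + j + 2 = (f ⟨x.val+j+2, by omega⟩).val := by
        omega
      rwa [e]
  invFun G := by
    obtain ⟨⟨g, hg, hgR⟩, ⟨h, hh, hhR⟩⟩ := G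
    refine ⟨glue hj g h, ⟨⟨glue_invol hj g h hg.1 hh.1, glue_nofix hj g h hg.2.1 hh.2.1,
        glue_nc hj g h hg.1 hh.1 hg.2.2 hh.2.2⟩, ?_⟩, ?_⟩
    · -- R condition
      intro i
      rcases Nat.eq_zero_or_pos i.val with hi0 | hi0
      · rw [glue_zero hj g h i hi0, hi0]; exact h1
      rcases eq_or_ne i.val (j+1) with hic | hic
      · rw [glue_c hj g h i hic, hic]; exact h2
      rcases lt_or_gt_of_ne hic with hlt | hgt
      · rw [glue_in hj g h i hi0 hlt]
        have := hgR ⟨i.val - 1, by omega⟩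
        simp only [Fin.val_mk] at this
        have e : i.val - 1 + 1 = i.val := by omega
        rwa [e] at this
      · rw [glue_out hj g h i hgt]
        have hilt := i.isLt
        have := hhR ⟨i.val - j - 2, by omega⟩
        simp only [Fin.val_mk] at this
        have e : i.val - j - 2 + j + 2 = i.val := by omega
        rwa [e] at this
    · exact glue_zero hj g h 0 rfl
  left_inv := by
    rintro ⟨f, ⟨⟨hinv, hne, hnc⟩, hR⟩, h0⟩
    apply Subtype.ext
    funext i
    apply Fin.ext
    show (glue hj _ _ i).val = (f i).val
    rcases Nat.eq_zero_or_pos i.val with hi0 | hi0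
    · rw [glue_zero hj _ _ i hi0]
      have : i = 0 := Fin.ext hi0
      rw [this, h0]
    rcases eq_or_ne i.val (j+1) with hic | hic
    · rw [glue_c hj _ _ i hic]
      have : i = f 0 := Fin.ext (by rw [h0, hic])
      rw [this, hinv]
      simp
    rcases lt_or_gt_of_ne hic with hlt | hgt
    · rw [glue_in hj _ _ i hi0 hlt]
      simp only [Fin.val_mk]
      have hb := inside_bound ⟨hinv, hne, hnc⟩ hj h0 i hi0 hlt
      have e : (⟨i.val - 1 + 1, by omega⟩ : Fin (n+1)) = i := by
        apply Fin.ext; simp only [Fin.val_mk]; omega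
      rw [e]
      omega
    · rw [glue_out hj _ _ i hgt]
      simp only [Fin.val_mk]
      have hb := outside_bound ⟨hinv, hne, hnc⟩ hj h0 i hgt
      have hilt := i.isLt
      have e : (⟨i.val - j - 2 + j + 2, by omega⟩ : Fin (n+1)) = i := by
        apply Fin.ext; simp only [Fin.val_mk]; omega
      rw [e]
      omega
  right_inv := by
    rintro ⟨⟨g, hg, hgR⟩, ⟨h, hh, hhR⟩⟩
    apply Prod.ext
    · apply Subtype.ext
      funext x
      apply Fin.ext
      show (glue hj g h ⟨x.val+1, by omega⟩).val - 1 = (g x).val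
      rw [glue_in hj g h ⟨x.val+1, by omega⟩ (by simp) (by simp only [Fin.val_mk]; omega)]
      simp only [Fin.val_mk]
      have e : (⟨x.val + 1 - 1, by omega⟩ : Fin j) = x := by
        apply Fin.ext; simp only [Fin.val_mk]; omega
      rw [e]
      omega
    · apply Subtype.ext
      funext x
      apply Fin.ext
      have hxlt := x.isLt
      show (glue hj g h ⟨x.val+j+2, by omega⟩).val - (j+2) = (h x).val
      rw [glue_out hj g h ⟨x.val+j+2, by omega⟩ (by simp only [Fin.val_mk]; omega)]
      simp only [Fin.val_mk]
      have e : (⟨x.val + j + 2 - j - 2, by omega⟩ : Fin (n-j-1)) = x := by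
        apply Fin.ext; simp only [Fin.val_mk]; omega
      rw [e]
      omega

lemma card_sigma' {m : ℕ} (F : Fin m → Type*) [∀ y, Finite (F y)] :
    Nat.card (Σ y, F y) = ∑ y, Nat.card (F y) := by
  letI : ∀ y, Fintype (F y) := fun y => Fintype.ofFinite _
  simp [Nat.card_eq_fintype_card, Fintype.card_sigma]

open Classical in
theorem cntR_succ (n : ℕ) (R : ℕ → ℕ → Prop) :
    cntR (n+1) R = ∑ t ∈ Finset.range n,
      if R 0 (t+1) ∧ R (t+1) 0 then
        cntR t (fun x y => R (x+1) (y+1)) * cntR (n-t-1) (fun x y => R (x+t+2) (y+t+2))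
      else 0 := by
  set P : (Fin (n+1) → Fin (n+1)) → Prop :=
    fun f => IsNCPairing f ∧ ∀ i : Fin (n+1), R i.val (f i).val with hP
  have hval : ∀ f : {f // P f}, 1 ≤ (f.1 0).val ∧ (f.1 0).val ≤ n := by
    intro f
    have hne := f.2.1.2.1 0
    have := (f.1 0).isLt
    refine ⟨?_, by omega⟩
    by_contra hlt
    exact hne (Fin.ext (by rw [show ((f.1 0 : Fin (n+1)) : ℕ) = 0 by omega]; simp))
  set gm : {f // P f} → Fin n := fun f => ⟨(f.1 0).val - 1, by have := hval f; omega⟩ with hgm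
  set bodyFun : ℕ → ℕ := fun t =>
    if R 0 (t+1) ∧ R (t+1) 0 then
      cntR t (fun x y => R (x+1) (y+1)) * cntR (n-t-1) (fun x y => R (x+t+2) (y+t+2))
    else 0 with hbody
  have e2 : ∀ y : Fin n, Nat.card {f : {f // P f} // gm f = y} = bodyFun y.val := by
    intro y
    have flat : {f : {f // P f} // gm f = y} ≃
        {f : Fin (n+1) → Fin (n+1) // P f ∧ (f 0).val = y.val + 1} := by
      refine ⟨fun F => ⟨F.1.1, F.1.2, ?_⟩, fun f => ⟨⟨f.1, f.2.1⟩, ?_⟩, ?_, ?_⟩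
      · have hv := hval F.1
        have := congrArg Fin.val F.2
        simp only [hgm, Fin.val_mk] at this
        omega
      · apply Fin.ext
        simp only [hgm, Fin.val_mk, f.2.2]
        omega
      · intro F; rfl
      · intro f; rfl
    rw [Nat.card_congr flat]
    simp only [hbody]
    by_cases hcond : R 0 (y.val+1) ∧ R (y.val+1) 0
    · rw [if_pos hcond]
      rw [Nat.card_congr (fibEquiv y.isLt hcond.1 hcond.2), Nat.card_prod]
      rfl
    · rw [if_neg hcond]
      have : IsEmpty {f : Fin (n+1) → Fin (n+1) // P f ∧ (f 0).val = y.val + 1} := by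
        refine ⟨fun F => hcond ⟨?_, ?_⟩⟩
        · have := F.2.1.2 0
          rwa [F.2.2] at this
        · have := F.2.1.2 (F.1 0)
          rw [F.2.1.1.1 0] at this
          simp only [F.2.2] at this
          simpa using this
      simp [Nat.card_of_isEmpty]
  calc cntR (n+1) R = Nat.card (Σ y : Fin n, {f : {f // P f} // gm f = y}) := by
        rw [cntR]
        exact Nat.card_congr (Equiv.sigmaFiberEquiv gm).symm
    _ = ∑ y : Fin n, Nat.card {f : {f // P f} // gm f = y} := card_sigma' _
    _ = ∑ y : Fin n, bodyFun y.val := Finset.sum_congr rfl (fun y _ => e2 y)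
    _ = ∑ t ∈ Finset.range n, bodyFun t := Fin.sum_univ_eq_sum_range bodyFun n

end Decomp
end Stmt13


namespace Stmt13

lemma sum_mod_reindex {M : Type*} [AddCommMonoid M] (d c n k : ℕ) (hd : 0 < d) (hc : c < d)
    (F : ℕ → M) (h0 : ∀ j < n, j % d ≠ c → F j = 0)
    (hk : ∀ s, (d*s + c < n ↔ s < k)) :
    ∑ j ∈ Finset.range n, F j = ∑ s ∈ Finset.range k, F (d*s + c) := by
  have hinj : ∀ a ∈ Finset.range k, ∀ b ∈ Finset.range k, d*a + c = d*b + c → a = b := by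
    intro a _ b _ hab
    have h : d*a = d*b := by omega
    exact Nat.eq_of_mul_eq_mul_left hd h
  rw [← Finset.sum_image (f := F) hinj]
  apply (Finset.sum_subset ?_ ?_).symm
  · intro x hx
    simp only [Finset.mem_image, Finset.mem_range] at hx ⊢
    obtain ⟨s, hs, rfl⟩ := hx
    exact (hk s).mpr hs
  · intro x hx hnx
    simp only [Finset.mem_range] at hx
    simp only [Finset.mem_image, Finset.mem_range] at hnx
    apply h0 x hx
    intro hxc
    apply hnx
    have hxd : d*(x/d) + c = x := by
      conv_rhs => rw [← Nat.div_add_mod x d]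
      rw [hxc]
    exact ⟨x / d, (hk _).mp (by rw [hxd]; exact hx), hxd⟩

variable {p : ℕ}

lemma wordLabel_period (t m : ℕ) : wordLabel p (2*p*t + m) = wordLabel p m := by
  unfold wordLabel
  have : (2*p*t + m) % (2*p) = m % (2*p) := by
    rw [Nat.add_comm, Nat.add_mul_mod_self_left]
  rw [this]

lemma wordLabel_eq_of_mod {a b : ℕ} (h : a % (2*p) = b % (2*p)) :
    wordLabel p a = wordLabel p b := by
  unfold wordLabel
  rw [h]

lemma match_iff (hp : 1 ≤ p) (i j : ℕ) :
    ((wordLabel p j).1 = (wordLabel p i).1 ∧ (wordLabel p j).2 = !(wordLabel p i).2)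
      ↔ j % (2*p) = 2*p - 1 - (i % (2*p)) := by
  unfold wordLabel
  have ha : i % (2*p) < 2*p := Nat.mod_lt _ (by omega)
  have hb : j % (2*p) < 2*p := Nat.mod_lt _ (by omega)
  by_cases h1 : i % (2*p) < p <;> by_cases h2 : j % (2*p) < p <;>
    simp [h1, h2] <;> omega

end Stmt13


namespace Stmt13
variable (p : ℕ)

/-- Raney numbers `R_r(n)` (as rationals), in subtraction-free form. -/
def Rq (r : ℕ) : ℕ → ℚ
  | 0 => 1
  | (m+1) => (((p+1)*m + p + r).choose (m+1) : ℚ) - p * (((p+1)*m + p + r).choose m : ℚ)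

@[simp] lemma Rq_zero (r : ℕ) : Rq p r 0 = 1 := rfl

lemma Rq_succ (r m : ℕ) :
    Rq p r (m+1) = (((p+1)*m + p + r).choose (m+1) : ℚ) - p * (((p+1)*m + p + r).choose m : ℚ) := rfl

/-- The `r = 0` Raney numbers vanish in positive degree. -/
lemma Rq_zero_left (m : ℕ) : Rq p 0 (m+1) = 0 := by
  have h : ((p+1)*m + p).choose (m+1) * (m+1) = ((p+1)*m + p).choose m * ((p+1)*m + p - m) :=
    Nat.choose_succ_right_eq _ _
  have h2 : (p+1)*m + p - m = p * (m+1) := by ring_nf; omega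
  rw [h2] at h
  have h3 : ((p+1)*m + p).choose (m+1) = p * ((p+1)*m + p).choose m := by
    have h4 : ((p+1)*m + p).choose (m+1) * (m+1) = (p * ((p+1)*m + p).choose m) * (m+1) := by
      rw [h]; ring
    exact Nat.eq_of_mul_eq_mul_right (by omega) h4
  rw [Rq_succ]
  push_cast [Nat.add_zero, h3]
  ring

/-- Pascal-type recurrence for Raney numbers. -/
lemma Rq_rec (r n : ℕ) : Rq p (r+1) (n+1) = Rq p r (n+1) + Rq p (r+p+1) n := by
  cases n with
  | zero =>
    simp only [Rq_succ, Rq_zero, Nat.mul_zero, Nat.zero_add]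
    rw [show p + (r+1) = (p + r) + 1 by ring]
    rw [Nat.choose_succ_succ (p+r) 0]
    push_cast [Nat.choose_zero_right, Nat.choose_one_right]
    ring
  | succ m =>
    simp only [Rq_succ]
    rw [show (p+1)*(m+1) + p + (r+1) = ((p+1)*(m+1) + p + r) + 1 by ring]
    rw [show (p+1)*m + p + (r+p+1) = (p+1)*(m+1) + p + r by ring]
    rw [Nat.choose_succ_succ ((p+1)*(m+1) + p + r) (m+1),
        Nat.choose_succ_succ ((p+1)*(m+1) + p + r) m]
    push_cast
    ring

/-- `R_1(n+1) = R_{p+1}(n)`. -/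
lemma Rq_one_succ (n : ℕ) : Rq p 1 (n+1) = Rq p (p+1) n := by
  cases n with
  | zero =>
    simp [Rq_succ, Nat.choose_one_right]
  | succ m =>
    have hz := Rq_zero_left p (m+1)
    rw [Rq_succ] at hz
    set M := (p+1)*(m+1) + p with hM
    have hM0 : (p+1)*(m+1) + p + 0 = M := by omega
    rw [hM0] at hz
    have e1 : ((M+1).choose (m+2) : ℚ) = (M.choose (m+1) : ℚ) + (M.choose (m+2) : ℚ) := by
      exact_mod_cast congrArg (Nat.cast (R := ℚ)) (Nat.choose_succ_succ M (m+1))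
    have e2 : ((M+1).choose (m+1) : ℚ) = (M.choose m : ℚ) + (M.choose (m+1) : ℚ) := by
      exact_mod_cast congrArg (Nat.cast (R := ℚ)) (Nat.choose_succ_succ M m)
    rw [Rq_succ, Rq_succ]
    rw [show (p+1)*(m+1) + p + 1 = M + 1 by omega,
        show (p+1)*m + p + (p+1) = M by rw [hM]; ring]
    have : ((M+1).choose (m+1+1) : ℚ) = (M+1).choose (m+2) := by norm_num
    rw [this, e1, e2]
    linarith [hz]

/-- Convolution identity: `∑ R_1(j) R_r(n-j) = R_{r+1}(n)`. -/
lemma Rq_conv : ∀ n r : ℕ, ∑ j ∈ Finset.range (n+1), Rq p 1 j * Rq p r (n - j) = Rq p (r+1) n := by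
  intro n
  induction n using Nat.strong_induction_on with
  | _ n IH =>
    intro r
    induction r with
    | zero =>
      rw [Finset.sum_eq_single n]
      · simp
      · intro j hj hne
        have hj' : j < n + 1 := Finset.mem_range.mp hj
        obtain ⟨m, hm⟩ : ∃ m, n - j = m + 1 := ⟨n - j - 1, by omega⟩
        rw [hm, Rq_zero_left, mul_zero]
      · intro h; exact absurd (Finset.self_mem_range_succ n) h
    | succ r IHr =>
      cases n with
      | zero => simp
      | succ m =>
        have key : ∀ j ∈ Finset.range (m+2), Rq p 1 j * Rq p (r+1) (m+1-j) =
            Rq p 1 j * Rq p r (m+1-j)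
              + (if j ≤ m then Rq p 1 j * Rq p (r+p+1) (m-j) else 0) := by
          intro j hj
          rcases le_or_gt j m with hle | hlt
          · rw [if_pos hle]
            have h1 : m + 1 - j = (m - j) + 1 := by omega
            rw [h1, Rq_rec, mul_add]
          · have hj2 : j = m + 1 := by have := Finset.mem_range.mp hj; omega
            subst hj2
            rw [if_neg (by omega)]
            simp
        rw [Finset.sum_congr rfl key, Finset.sum_add_distrib]
        rw [IHr]
        have h2 : ∑ j ∈ Finset.range (m+2), (if j ≤ m then Rq p 1 j * Rq p (r+p+1) (m-j) else 0)
            = ∑ j ∈ Finset.range (m+1), Rq p 1 j * Rq p (r+p+1) (m-j) := by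
          rw [Finset.sum_range_succ, if_neg (by omega), add_zero]
          exact Finset.sum_congr rfl (fun j hj => if_pos (by
            have := Finset.mem_range.mp hj; omega))
        rw [h2, IH m (by omega) (r+p+1)]
        rw [show r + 1 + 1 = (r+1)+1 from rfl, Rq_rec p (r+1) m]
        ring_nf

/-- Closed form: `R_1(k) = C(pk+k, k) / (pk+1)`. -/
lemma Rq_one_eq (hp : 1 ≤ p) (k : ℕ) :
    Rq p 1 k = (1 / ((p*k+1 : ℕ) : ℚ)) * ((p*k+k).choose k) := by
  cases k with
  | zero => simp
  | succ m =>
    rw [Rq_succ]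
    have hN : (p+1)*m + p + 1 = p*(m+1) + (m+1) := by ring
    rw [hN]
    set N := p*(m+1) + (m+1) with hNdef
    have key : N.choose (m+1) * (m+1) = N.choose m * (p*(m+1)+1) := by
      have := Nat.choose_succ_right_eq N m
      rw [this]
      congr 1
      omega
    have hpos : ((p*(m+1)+1 : ℕ) : ℚ) ≠ 0 := by positivity
    have hm1 : ((m+1 : ℕ) : ℚ) ≠ 0 := by positivity
    have keyq : (N.choose (m+1) : ℚ) * (m+1) = (N.choose m : ℚ) * (p*(m+1)+1) := by
      exact_mod_cast congrArg (Nat.cast (R := ℚ)) key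
    field_simp
    push_cast at keyq ⊢
    nlinarith [keyq]

end Stmt13


namespace Stmt13
section Rot
variable {m : ℕ}

/-- Cyclic rotation `x ↦ x + 1` on `Fin (m+1)`. -/
def rotE (m : ℕ) : Equiv.Perm (Fin (m+1)) where
  toFun x := ⟨(x.val+1) % (m+1), Nat.mod_lt _ (by omega)⟩
  invFun x := ⟨(x.val + m) % (m+1), Nat.mod_lt _ (by omega)⟩
  left_inv x := by
    apply Fin.ext
    simp only [Fin.val_mk]
    rcases eq_or_lt_of_le (Nat.lt_succ_iff.mp x.isLt) with h | h
    · rw [h, Nat.mod_self, Nat.zero_add]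
      exact Nat.mod_eq_of_lt (by omega)
    · have e1 : (x.val+1) % (m+1) = x.val + 1 := Nat.mod_eq_of_lt (by omega)
      rw [e1, show x.val + 1 + m = (m+1) + x.val by ring, Nat.add_mod_left]
      exact Nat.mod_eq_of_lt x.isLt
  right_inv x := by
    apply Fin.ext
    simp only [Fin.val_mk]
    rcases Nat.eq_zero_or_pos x.val with h | h
    · have e : m % (m+1) = m := Nat.mod_eq_of_lt (by omega)
      rw [h, Nat.zero_add, e, Nat.mod_self]
    · have e2 : (x.val - 1) % (m+1) = x.val - 1 := Nat.mod_eq_of_lt (by have := x.isLt; omega)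
      rw [show x.val + m = (m+1) + (x.val - 1) by omega, Nat.add_mod_left,
          e2, show x.val - 1 + 1 = x.val by omega]
      exact Nat.mod_eq_of_lt x.isLt

lemma rotE_val (x : Fin (m+1)) : ((rotE m) x).val = (x.val + 1) % (m+1) := rfl

lemma rotE_val_lt {x : Fin (m+1)} (h : x.val < m) : ((rotE m) x).val = x.val + 1 := by
  rw [rotE_val]; exact Nat.mod_eq_of_lt (by omega)

lemma rotE_val_last {x : Fin (m+1)} (h : x.val = m) : ((rotE m) x).val = 0 := by
  rw [rotE_val, h, Nat.mod_self]

lemma rotE_symm_val_pos {x : Fin (m+1)} (h : 0 < x.val) : ((rotE m).symm x).val = x.val - 1 := by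
  show (x.val + m) % (m+1) = x.val - 1
  rw [show x.val + m = (m+1) + (x.val - 1) by omega, Nat.add_mod_left]
  exact Nat.mod_eq_of_lt (by have := x.isLt; omega)

lemma rotE_symm_val_zero {x : Fin (m+1)} (h : x.val = 0) : ((rotE m).symm x).val = m := by
  show (x.val + m) % (m+1) = m
  rw [h, Nat.zero_add]
  exact Nat.mod_eq_of_lt (by omega)

lemma conj_invol {α : Type*} (e : Equiv.Perm α) {f : α → α} (hf : ∀ x, f (f x) = x) :
    ∀ x, e.symm (f (e (e.symm (f (e x))))) = x := by
  intro x
  rw [Equiv.apply_symm_apply, hf, Equiv.symm_apply_apply]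

lemma conj_nofix {α : Type*} (e : Equiv.Perm α) {f : α → α} (hf : ∀ x, f x ≠ x) :
    ∀ x, e.symm (f (e x)) ≠ x := by
  intro x hx
  apply hf (e x)
  have := congrArg e hx
  rwa [Equiv.apply_symm_apply] at this

lemma nc_conj_rot {f : Fin (m+1) → Fin (m+1)} (hf : IsNCPairing f) :
    IsNCPairing (fun x => (rotE m).symm (f (rotE m x))) := by
  obtain ⟨hinv, hne, hnc⟩ := hf
  refine ⟨conj_invol _ hinv, conj_nofix _ hne, ?_⟩
  intro a b hab h1 h2
  set g : Fin (m+1) → Fin (m+1) := fun x => (rotE m).symm (f (rotE m x)) with hg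
  have hrg : ∀ x, rotE m (g x) = f (rotE m x) := fun x => (rotE m).apply_symm_apply _
  have hva : a.val < b.val := hab
  have hvb : b.val < (g a).val := h1
  have hvc : (g a).val < (g b).val := h2
  have hgbm := (g b).isLt
  have ham : a.val < m := by omega
  have hbm : b.val < m := by omega
  have hgam : (g a).val < m := by omega
  rcases eq_or_lt_of_le (Nat.lt_succ_iff.mp hgbm) with hlast | hlt
  · -- wrap case : f (rot b) = 0, so f 0 = rot b
    have h0 : f (rotE m b) = ⟨0, by omega⟩ := by
      rw [← hrg b]; apply Fin.ext; simp only [Fin.val_mk]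
      exact rotE_val_last (x := g b) hlast
    have hf0 : f ⟨0, by omega⟩ = rotE m b := by rw [← h0, hinv]
    refine hnc ⟨0, by omega⟩ (rotE m a) ?_ ?_ ?_
    · show (0:ℕ) < (rotE m a).val
      rw [rotE_val_lt ham]; omega
    · show (rotE m a).val < (f ⟨0, by omega⟩).val
      rw [hf0, rotE_val_lt ham, rotE_val_lt hbm]; omega
    · show (f ⟨0, by omega⟩).val < (f (rotE m a)).val
      rw [hf0, ← hrg a, rotE_val_lt hbm, rotE_val_lt hgam]; omega
  · refine hnc (rotE m a) (rotE m b) ?_ ?_ ?_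
    · show (rotE m a).val < (rotE m b).val
      rw [rotE_val_lt ham, rotE_val_lt hbm]; omega
    · show (rotE m b).val < (f (rotE m a)).val
      rw [← hrg a, rotE_val_lt hbm, rotE_val_lt hgam]; omega
    · show (f (rotE m a)).val < (f (rotE m b)).val
      rw [← hrg a, ← hrg b, rotE_val_lt hgam, rotE_val_lt (by omega : (g b).val < m)]; omega

lemma nc_conj_rot_inv {g : Fin (m+1) → Fin (m+1)} (hg : IsNCPairing g) :
    IsNCPairing (fun x => rotE m (g ((rotE m).symm x))) := by
  obtain ⟨hinv, hne, hnc⟩ := hg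
  refine ⟨?_, ?_, ?_⟩
  · intro x
    simp only
    rw [Equiv.symm_apply_apply, hinv, Equiv.apply_symm_apply]
  · intro x hx
    apply hne ((rotE m).symm x)
    have := congrArg (rotE m).symm hx
    rwa [Equiv.symm_apply_apply] at this
  intro a b hab h1 h2
  set f : Fin (m+1) → Fin (m+1) := fun x => rotE m (g ((rotE m).symm x)) with hf
  have hrf : ∀ x, (rotE m).symm (f x) = g ((rotE m).symm x) := fun x => (rotE m).symm_apply_apply _
  have hva : a.val < b.val := hab
  have hvb : b.val < (f a).val := h1
  have hvc : (f a).val < (f b).val := h2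
  have hfbm := (f b).isLt
  have hb1 : 1 ≤ b.val := by omega
  have hfa1 : 1 ≤ (f a).val := by omega
  have hfb1 : 1 ≤ (f b).val := by omega
  -- g-chords : {rot⁻¹ a, rot⁻¹ (f a)}, {rot⁻¹ b, rot⁻¹ (f b)}
  have hga : g ((rotE m).symm a) = (rotE m).symm (f a) := (hrf a).symm
  have hgb : g ((rotE m).symm b) = (rotE m).symm (f b) := (hrf b).symm
  rcases Nat.eq_zero_or_pos a.val with ha0 | ha0
  · -- wrap : rot⁻¹ a = m ; use crossing at (rot⁻¹ b, rot⁻¹ (f a))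
    have hgfa : g ((rotE m).symm (f a)) = (rotE m).symm a := by
      rw [← hga, hinv]
    refine hnc ((rotE m).symm b) ((rotE m).symm (f a)) ?_ ?_ ?_
    · show ((rotE m).symm b).val < ((rotE m).symm (f a)).val
      rw [rotE_symm_val_pos hb1, rotE_symm_val_pos hfa1]; omega
    · show ((rotE m).symm (f a)).val < (g ((rotE m).symm b)).val
      rw [hgb, rotE_symm_val_pos hfa1, rotE_symm_val_pos hfb1]; omega
    · show (g ((rotE m).symm b)).val < (g ((rotE m).symm (f a))).val
      rw [hgb, hgfa, rotE_symm_val_pos hfb1, rotE_symm_val_zero ha0]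
      omega
  · refine hnc ((rotE m).symm a) ((rotE m).symm b) ?_ ?_ ?_
    · show ((rotE m).symm a).val < ((rotE m).symm b).val
      rw [rotE_symm_val_pos ha0, rotE_symm_val_pos hb1]; omega
    · show ((rotE m).symm b).val < (g ((rotE m).symm a)).val
      rw [hga, rotE_symm_val_pos hb1, rotE_symm_val_pos hfa1]; omega
    · show (g ((rotE m).symm a)).val < (g ((rotE m).symm b)).val
      rw [hga, hgb, rotE_symm_val_pos hfa1, rotE_symm_val_pos hfb1]; omega

end Rot
end Stmt13

namespace Stmt13
lemma cntR_rotate (m : ℕ) (R : ℕ → ℕ → Prop) :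
    cntR (m+1) (fun x y => R ((x+1) % (m+1)) ((y+1) % (m+1))) = cntR (m+1) R := by
  apply Nat.card_congr
  refine ⟨fun F => ⟨fun x => rotE m (F.1 ((rotE m).symm x)), nc_conj_rot_inv F.2.1, ?_⟩,
          fun G => ⟨fun x => (rotE m).symm (G.1 (rotE m x)), nc_conj_rot G.2.1, ?_⟩, ?_, ?_⟩
  · intro i
    have h : R ((((rotE m).symm i).val + 1) % (m+1))
        (((F.1 ((rotE m).symm i)).val + 1) % (m+1)) := F.2.2 ((rotE m).symm i)
    have e1 : (((rotE m).symm i).val + 1) % (m+1) = i.val := by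
      rw [← rotE_val, Equiv.apply_symm_apply]
    have e2 : ((F.1 ((rotE m).symm i)).val + 1) % (m+1) = (rotE m (F.1 ((rotE m).symm i))).val :=
      (rotE_val _).symm
    rw [e1, e2] at h
    exact h
  · intro i
    have h : R ((rotE m i).val) ((G.1 (rotE m i)).val) := G.2.2 (rotE m i)
    show R ((i.val + 1) % (m+1)) ((((rotE m).symm (G.1 (rotE m i))).val + 1) % (m+1))
    have e1 : (i.val + 1) % (m+1) = (rotE m i).val := (rotE_val _).symm
    have e2 : (((rotE m).symm (G.1 (rotE m i))).val + 1) % (m+1) = (G.1 (rotE m i)).val := by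
      rw [← rotE_val, Equiv.apply_symm_apply]
    rw [e1, e2]
    exact h
  · intro F
    apply Subtype.ext
    funext x
    simp only [Equiv.symm_apply_apply]
  · intro G
    apply Subtype.ext
    funext x
    simp only [Equiv.apply_symm_apply]
end Stmt13

namespace Stmt13

variable {p : ℕ}

/-- Number of noncrossing matched pairings of the length-`n` slice of the biinfinite
periodic word `(1 2 ⋯ p p* ⋯ 2* 1*)^∞`, starting at absolute position `a`. -/
noncomputable def cw (p a n : ℕ) : ℕ :=
  cntR n (fun x y => (wordLabel p (a+y)).1 = (wordLabel p (a+x)).1 ∧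
                     (wordLabel p (a+y)).2 = !(wordLabel p (a+x)).2)

lemma cw_zero (a : ℕ) : cw p a 0 = 1 := cntR_zero _

lemma cw_add_one (a m : ℕ) (hm : (2*p) ∣ m) : cw p (a+1) m = cw p a m := by
  cases m with
  | zero => rw [cw_zero, cw_zero]
  | succ m' =>
    unfold cw
    conv_rhs => rw [← cntR_rotate m']
    apply cntR_congr
    intro x y hx hy
    have key : ∀ z, z < m' + 1 → wordLabel p ((a+1)+z) = wordLabel p (a + ((z+1) % (m'+1))) := by
      intro z hz
      rcases eq_or_lt_of_le (Nat.lt_succ_iff.mp hz) with he | hlt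
      · rw [he, Nat.mod_self, Nat.add_zero]
        obtain ⟨u, hu⟩ := hm
        apply wordLabel_eq_of_mod
        rw [show a + 1 + m' = a + 2*p*u by omega]
        exact Nat.add_mul_mod_self_left a (2*p) u
      · rw [Nat.mod_eq_of_lt (by omega), show a + 1 + z = a + (z+1) by omega]
    rw [key x hx, key y hy]

lemma cw_align (a m : ℕ) : cw p a (2*p*m) = cw p 0 (2*p*m) := by
  induction a with
  | zero => rfl
  | succ a ih => rw [cw_add_one a _ ⟨m, rfl⟩, ih]

lemma stepU (hp : 1 ≤ p) (i t : ℕ) (hi : i < p) (ht : 1 ≤ t) :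
    cw p i (2*p*t - 2*i) = ∑ s ∈ Finset.range t,
      cw p (i+1) (2*p*(s+1) - 2*(i+1)) * cw p 0 (2*p*(t-(s+1))) := by
  have e0 : 2*p*1 = 2*p := by ring
  have hpt : 2*p*1 ≤ 2*p*t := Nat.mul_le_mul_left _ ht
  set c := 2*p - 2*i - 2 with hc
  set n := 2*p*t - 2*i - 1 with hn
  have hlen : 2*p*t - 2*i = n + 1 := by omega
  rw [hlen]
  unfold cw
  rw [cntR_succ]
  have hmodi : (i + 0) % (2*p) = i := by
    rw [Nat.add_zero]; exact Nat.mod_eq_of_lt (by omega)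
  have hmod2 : ∀ j, j % (2*p) = c →
      (i + (j+1)) % (2*p) = 2*p - 1 - ((i + 0) % (2*p)) := by
    intro j hj
    rw [hmodi]
    have hdm := Nat.div_add_mod j (2*p)
    rw [hj] at hdm
    rw [show i + (j+1) = 2*p*(j/(2*p)) + (2*p - 1 - i) by omega, Nat.mul_add_mod]
    exact Nat.mod_eq_of_lt (by omega)
  have hmod1 : ∀ j, (i + (j+1)) % (2*p) = 2*p - 1 - ((i + 0) % (2*p)) → j % (2*p) = c := by
    intro j hmod
    rw [hmodi] at hmod
    have hdm := Nat.div_add_mod (i+(j+1)) (2*p)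
    rw [hmod] at hdm
    rw [show j = 2*p*((i+(j+1))/(2*p)) + c by omega, Nat.mul_add_mod]
    exact Nat.mod_eq_of_lt (by omega)
  have hcond : ∀ j, ((wordLabel p (i+(j+1))).1 = (wordLabel p (i+0)).1 ∧
      (wordLabel p (i+(j+1))).2 = !(wordLabel p (i+0)).2) ↔ j % (2*p) = c := by
    intro j
    rw [match_iff hp]
    exact ⟨hmod1 j, hmod2 j⟩
  have hcond2 : ∀ j, j % (2*p) = c → ((wordLabel p (i+0)).1 = (wordLabel p (i+(j+1))).1 ∧
      (wordLabel p (i+0)).2 = !(wordLabel p (i+(j+1))).2) := by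
    intro j hj
    rw [match_iff hp, hmod2 j hj, hmodi]
    omega
  rw [sum_mod_reindex (2*p) c n t (by omega) (by omega) _ ?_ ?_]
  · -- term-by-term evaluation
    apply Finset.sum_congr rfl
    intro s hs
    have hst : s < t := Finset.mem_range.mp hs
    have hjmod : (2*p*s + c) % (2*p) = c := by
      rw [Nat.mul_add_mod]; exact Nat.mod_eq_of_lt (by omega)
    rw [if_pos ⟨(hcond _).mpr hjmod, hcond2 _ hjmod⟩]
    have es : 2*p*(s+1) = 2*p*s + 2*p := by ring
    have hs1 : s + 1 ≤ t := by omega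
    have est : 2*p*((t-(s+1)) + (s+1)) = 2*p*t := by rw [Nat.sub_add_cancel hs1]
    have est' : 2*p*((t-(s+1)) + (s+1)) = 2*p*(t-(s+1)) + 2*p*(s+1) := Nat.mul_add _ _ _
    congr 1
    · -- inside region
      have harg : 2*p*s + c = 2*p*(s+1) - 2*(i+1) := by omega
      rw [← harg]
      apply cntR_congr
      intro x y _ _
      rw [show i + (x+1) = (i+1) + x by omega, show i + (y+1) = (i+1) + y by omega]
    · -- outside region
      have harg2 : n - (2*p*s + c) - 1 = 2*p*(t-(s+1)) := by omega
      rw [harg2]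
      have hstep : cntR (2*p*(t-(s+1)))
          (fun x y => (wordLabel p (i+(y+(2*p*s+c)+2))).1 = (wordLabel p (i+(x+(2*p*s+c)+2))).1 ∧
            (wordLabel p (i+(y+(2*p*s+c)+2))).2 = !(wordLabel p (i+(x+(2*p*s+c)+2))).2)
          = cw p (i+(2*p*s+c)+2) (2*p*(t-(s+1))) := by
        unfold cw
        apply cntR_congr
        intro x y _ _
        rw [show i + (x+(2*p*s+c)+2) = (i+(2*p*s+c)+2) + x by omega,
            show i + (y+(2*p*s+c)+2) = (i+(2*p*s+c)+2) + y by omega]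
      rw [hstep, cw_align]
      rfl
  · -- vanishing off the congruence class
    intro j hj hne
    rw [if_neg]
    intro hcc
    exact hne ((hcond j).mp hcc.1)
  · -- range identification
    intro s
    constructor
    · intro hlt
      by_contra hge
      have := Nat.mul_le_mul_left (2*p) (show t ≤ s by omega)
      omega
    · intro hst
      have h1 := Nat.mul_le_mul_left (2*p) (show s+1 ≤ t by omega)
      have es : 2*p*(s+1) = 2*p*s + 2*p := by ring
      omega

/-- The grand induction: the pairing counts equal the Raney numbers. -/
lemma main_count (hp : 1 ≤ p) : ∀ k, (cw p 0 (2*p*k) : ℚ) = Rq p 1 k := by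
  intro k
  induction k using Nat.strong_induction_on with
  | _ t IH =>
    rcases Nat.eq_zero_or_pos t with rfl | ht
    · rw [Nat.mul_zero, cw_zero]; simp
    have Acl : ∀ d, d ≤ p - 1 → ∀ t', 1 ≤ t' → t' ≤ t →
        (cw p (p - d) (2*p*t' - 2*(p-d)) : ℚ) = Rq p (d+1) (t'-1) := by
      intro d
      induction d with
      | zero =>
        intro _ t' ht1 ht2
        simp only [Nat.sub_zero, Nat.zero_add]
        have harg : 2*p*t' - 2*p = 2*p*(t'-1) := by
          obtain ⟨u, rfl⟩ : ∃ u, t' = u + 1 := ⟨t'-1, by omega⟩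
          have e : 2*p*(u+1) = 2*p*u + 2*p := by ring
          simp only [Nat.add_sub_cancel]
          omega
        rw [harg, cw_align]
        exact IH (t'-1) (by omega)
      | succ d IHd =>
        intro hd t' ht1 ht2
        have hd' : d ≤ p - 1 := by omega
        have hi : p - (d+1) < p := by omega
        have hsub : p - (d+1) + 1 = p - d := by omega
        rw [stepU hp (p-(d+1)) t' hi ht1]
        push_cast
        have hterm : ∀ s ∈ Finset.range t',
            (cw p (p-(d+1)+1) (2*p*(s+1) - 2*(p-(d+1)+1)) : ℚ) * (cw p 0 (2*p*(t'-(s+1))) : ℚ)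
            = Rq p (d+1) s * Rq p 1 (t'-1-s) := by
          intro s hs
          have hst : s < t' := Finset.mem_range.mp hs
          rw [hsub, IHd hd' (s+1) (by omega) (by omega), IH (t'-(s+1)) (by omega)]
          rw [show s + 1 - 1 = s by omega, show t' - (s+1) = t'-1-s by omega]
        rw [Finset.sum_congr rfl hterm]
        have hrefl : ∑ s ∈ Finset.range t', Rq p (d+1) s * Rq p 1 (t'-1-s)
            = ∑ s ∈ Finset.range t', Rq p 1 s * Rq p (d+1) (t'-1-s) := by
          rw [← Finset.sum_range_reflect (fun s => Rq p 1 s * Rq p (d+1) (t'-1-s)) t']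
          apply Finset.sum_congr rfl
          intro s hs
          have hst : s < t' := Finset.mem_range.mp hs
          rw [show t' - 1 - (t'-1-s) = s by omega, mul_comm]
        rw [hrefl]
        have hconv := Rq_conv p (t'-1) (d+1)
        rw [show t'-1+1 = t' by omega] at hconv
        rw [hconv]
    -- now the main recursion at i = 0
    have h0 : cw p 0 (2*p*t) = cw p 0 (2*p*t - 2*0) := by rw [Nat.mul_zero, Nat.sub_zero]
    rw [h0, stepU hp 0 t (by omega) ht]
    push_cast
    have hterm : ∀ s ∈ Finset.range t,
        (cw p (0+1) (2*p*(s+1) - 2*(0+1)) : ℚ) * (cw p 0 (2*p*(t-(s+1))) : ℚ)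
        = Rq p p s * Rq p 1 (t-1-s) := by
      intro s hs
      have hst : s < t := Finset.mem_range.mp hs
      have h1 : (0:ℕ)+1 = p - (p-1) := by omega
      have hA := Acl (p-1) (le_refl _) (s+1) (by omega) (by omega)
      rw [show p - 1 + 1 = p by omega, show s+1-1 = s by omega] at hA
      rw [h1, hA, IH (t-(s+1)) (by omega), show t - (s+1) = t-1-s by omega]
    rw [Finset.sum_congr rfl hterm]
    have hrefl : ∑ s ∈ Finset.range t, Rq p p s * Rq p 1 (t-1-s)
        = ∑ s ∈ Finset.range t, Rq p 1 s * Rq p p (t-1-s) := by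
      rw [← Finset.sum_range_reflect (fun s => Rq p 1 s * Rq p p (t-1-s)) t]
      apply Finset.sum_congr rfl
      intro s hs
      have hst : s < t := Finset.mem_range.mp hs
      rw [show t - 1 - (t-1-s) = s by omega, mul_comm]
    rw [hrefl]
    have hconv := Rq_conv p (t-1) p
    rw [show t-1+1 = t by omega] at hconv
    rw [hconv, ← Rq_one_succ p (t-1), show t-1+1 = t by omega]

end Stmt13

theorem stmt13 (p k : ℕ) (hp : 1 ≤ p) :
    (Nat.card {f : Fin (2*p*k) → Fin (2*p*k) // IsWkPairing p f} : ℚ) =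
      (1 / ((p*k+1 : ℕ) : ℚ)) * ((p*k+k).choose k) := by
  have hcard : Nat.card {f : Fin (2*p*k) → Fin (2*p*k) // IsWkPairing p f}
      = Stmt13.cw p 0 (2*p*k) := by
    unfold Stmt13.cw Stmt13.cntR
    apply Nat.card_congr
    apply Equiv.subtypeEquivRight
    intro f
    unfold IsWkPairing
    constructor
    · rintro ⟨h1, h2⟩
      refine ⟨h1, fun i => ?_⟩
      have := h2 i
      simpa [Nat.zero_add] using this
    · rintro ⟨h1, h2⟩
      refine ⟨h1, fun i => ?_⟩
      have := h2 i
      simpa [Nat.zero_add] using this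
  rw [hcard, Stmt13.main_count hp k, Stmt13.Rq_one_eq p hp k]
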